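/- Define the sequence d_0 = 0, d_1 = 1, and d_k = 2^{2k−2} + 2^{2k−4} + d_{k−1} + 7·d_{k−2} for k ≥ 2. Then for every k ≥ 0, the Latin square (L_k, lex) of order n = 2^k has a greedy defining set of cardinality at most d_k. -/

import Mathlib

open SimpleGraph

/-- First-Fit (greedy) coloring of `G` with respect to the vertex ordering given by the
injective position function `ord` (vertex `u` comes before `v` iff `ord u < ord v`).
Each vertex receives the smallest positive integer not used on earlier neighbors. -/
noncomputable def firstFit {V : Type*} (G : SimpleGraph V) (ord : V → ℕ) : V → ℕ :=
  (InvImage.wf ord Nat.lt_wfRel.wf).fix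
    (fun v ih => sInf {c : ℕ | 1 ≤ c ∧ ∀ u, ∀ h : ord u < ord v, G.Adj u v → ih u h ≠ c})

/-- `FFColors G ord` is the number of colors used by the First-Fit coloring. -/
noncomputable def FFColors {V : Type*} [Fintype V] (G : SimpleGraph V) (ord : V → ℕ) : ℕ :=
  (Finset.univ.image (firstFit G ord)).card

open Classical in
/-- First-Fit coloring of `(G, ord)` subject to the pre-coloring `C₀` on the set `S`:
vertices of `S` keep their pre-assigned colors and are skipped by the scan; every other
vertex receives the smallest positive integer not already assigned (or pre-assigned)
to a neighbor. -/
noncomputable def firstFitWith {V : Type*} (G : SimpleGraph V) (ord : V → ℕ)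
    (S : Set V) (C₀ : V → ℕ) : V → ℕ :=
  (InvImage.wf ord Nat.lt_wfRel.wf).fix
    (fun v ih =>
      if v ∈ S then C₀ v
      else sInf {c : ℕ | 1 ≤ c ∧ (∀ u, G.Adj u v → u ∈ S → C₀ u ≠ c) ∧
        ∀ u, ∀ h : ord u < ord v, G.Adj u v → u ∉ S → ih u h ≠ c})

/-- Position function of the lexicographic order on `V × W` induced by the position
functions `σ` on `V` and `σ'` on `W` (for injective `σ, σ'`: `(u,v)` comes before
`(u',v')` iff `σ u < σ u'`, or `u = u'` and `σ' v < σ' v'`). -/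
noncomputable def lexPos {V W : Type*} [Fintype W] (σ : V → ℕ) (σ' : W → ℕ) : V × W → ℕ :=
  fun p => σ p.1 * (Finset.univ.sup σ' + 1) + σ' p.2

/-- A proper coloring with colors in the positive integers. -/
def IsProperColoring {V : Type*} (G : SimpleGraph V) (C : V → ℕ) : Prop :=
  (∀ v, 1 ≤ C v) ∧ ∀ ⦃u v⦄, G.Adj u v → C u ≠ C v

/-- `D` is a `(C, ord)`-descent: `D = {v} ∪ N` where `C v = y`, `x < y` is a (positive)
color, `N` is the set of neighbors of `v` of color `x`, and every `u ∈ N` comes after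
`v` in the order. -/
def IsDescent {V : Type*} (G : SimpleGraph V) (ord : V → ℕ) (C : V → ℕ) (D : Set V) : Prop :=
  ∃ v x, 1 ≤ x ∧ x < C v ∧
    (∀ u, G.Adj u v → C u = x → ord v < ord u) ∧
    D = insert v {u | G.Adj u v ∧ C u = x}

/-- The Grundy number: the maximum of `FFColors G ord` over all vertex orderings. -/
noncomputable def grundy {V : Type*} [Fintype V] (G : SimpleGraph V) : ℕ :=
  sSup {n | ∃ ord : V → ℕ, Function.Injective ord ∧ FFColors G ord = n}

/-- The independence number of `G`. -/
noncomputable def indepNum {V : Type*} [Fintype V] (G : SimpleGraph V) : ℕ :=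
  sSup {n | ∃ s : Finset V, (∀ u ∈ s, ∀ v ∈ s, ¬ G.Adj u v) ∧ s.card = n}

/-- An `m × n` Latin rectangle: entries in `{1, …, n}`, no repeats in rows or columns. -/
def IsLatinRectangle {m n : ℕ} (R : Fin m → Fin n → ℕ) : Prop :=
  (∀ i j, R i j ∈ Finset.Icc 1 n) ∧ (∀ i, Function.Injective (R i)) ∧
    (∀ j, Function.Injective (fun i => R i j))

/-- `S` is a greedy defining set of the rectangle `R` (cells scanned in lexicographic,
i.e. row-by-row, order): the greedy completion, which skips the cells of `S` (fixed to
their values in `R`) and places in each other cell the smallest positive integer not yet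
appearing in its row or column, reproduces `R`.  This is First-Fit on the rook's graph
`K_m □ K_n` subject to the pre-coloring of `S` by `R`. -/
noncomputable def IsRectGDS {m n : ℕ} (R : Fin m → Fin n → ℕ) (S : Set (Fin m × Fin n)) : Prop :=
  firstFitWith ((⊤ : SimpleGraph (Fin m)).boxProd (⊤ : SimpleGraph (Fin n)))
    (lexPos Fin.val Fin.val) S (fun p => R p.1 p.2) = fun p => R p.1 p.2

/-- The Latin square `L_k` of order `2^k`: the entry in row `i`, column `j` is
`2^k - (i XOR j)`; equivalently the `k`-fold tensor product of `[[2,1],[1,2]]`. -/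
def Lsquare (k : ℕ) : Fin (2 ^ k) → Fin (2 ^ k) → ℕ :=
  fun i j => 2 ^ k - (i.val ^^^ j.val)
namespace GDSaux

/-- Two-step induction. -/
lemma two_step {P : ℕ → Prop} (h0 : P 0) (h1 : P 1)
    (hs : ∀ n, P n → P (n + 1) → P (n + 2)) : ∀ n, P n := by
  have key : ∀ n, P n ∧ P (n + 1) := by
    intro n
    induction n with
    | zero => exact ⟨h0, h1⟩
    | succ m ih => exact ⟨ih.2, hs m ih.1 ih.2⟩
  exact fun n => (key n).1

lemma tb_ge {x s : ℕ} (h : Nat.testBit x s = true) : 2 ^ s ≤ x := by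
  by_contra hc
  rw [Nat.testBit_eq_false_of_lt (by omega)] at h
  exact Bool.false_ne_true h

lemma lt_of_high_bits {x s : ℕ} (h : ∀ j, s ≤ j → Nat.testBit x j = false) : x < 2 ^ s := by
  have hz : x >>> s = 0 := by
    apply Nat.eq_of_testBit_eq
    intro j
    rw [Nat.testBit_shiftRight, Nat.zero_testBit, h _ (by omega)]
  rw [Nat.shiftRight_eq_div_pow] at hz
  have h2 := Nat.two_pow_pos s
  exact (Nat.div_eq_zero_iff_lt h2).mp hz

lemma tb_mask_self {x s : ℕ} (hx : x < 2 ^ s) : Nat.testBit (2 ^ s ^^^ x) s = true := by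
  rw [Nat.testBit_xor, Nat.testBit_two_pow, Nat.testBit_eq_false_of_lt hx]
  simp

lemma tb_mask_ne {x s t : ℕ} (ht : t ≠ s) : Nat.testBit (2 ^ s ^^^ x) t = Nat.testBit x t := by
  rw [Nat.testBit_xor, Nat.testBit_two_pow]
  simp [Ne.symm ht]

lemma mask_lt {x s : ℕ} (hx : x < 2 ^ s) : 2 ^ s ^^^ x < 2 ^ (s + 1) := by
  have h1 : (2:ℕ) ^ s < 2 ^ (s+1) := by
    have := Nat.two_pow_pos s
    rw [pow_succ]; omega
  exact Nat.xor_lt_two_pow h1 (by omega)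

lemma mask_ge {x s : ℕ} (hx : x < 2 ^ s) : 2 ^ s ≤ 2 ^ s ^^^ x :=
  tb_ge (tb_mask_self hx)

lemma mod_two_pow_eq_self {x s : ℕ} (hx : x < 2 ^ s) : x % 2 ^ s = x := Nat.mod_eq_of_lt hx

lemma mask_mod {x s t : ℕ} (hst : t ≤ s) : (2 ^ s ^^^ x) % 2 ^ t = x % 2 ^ t := by
  apply Nat.eq_of_testBit_eq
  intro j
  rw [Nat.testBit_mod_two_pow, Nat.testBit_mod_two_pow]
  by_cases hj : j < t
  · rw [tb_mask_ne (by omega)]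
  · simp [hj]

lemma xor_mod_two_pow (x y s : ℕ) : (x % 2 ^ s) ^^^ (y % 2 ^ s) = (x ^^^ y) % 2 ^ s := by
  apply Nat.eq_of_testBit_eq
  intro j
  rw [Nat.testBit_xor, Nat.testBit_mod_two_pow, Nat.testBit_mod_two_pow,
    Nat.testBit_mod_two_pow, Nat.testBit_xor]
  by_cases hj : j < s <;> simp [hj]

/-- The recursively defined free set (as a set of pairs `(i, m)` with `m = i XOR j`). -/
def Tf : ℕ → Finset (ℕ × ℕ)
  | 0 => {(0, 0)}
  | 1 => {(0, 0), (1, 0), (1, 1)}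
  | (κ + 2) =>
      ((Tf (κ + 1)).image fun p => (2 ^ (κ + 1) ^^^ p.1, p.2)) ∪
      ((Tf (κ + 1)).image fun p => (2 ^ (κ + 1) ^^^ p.1, 2 ^ (κ + 1) ^^^ p.2)) ∪
      (Tf κ) ∪
      ((Tf κ).image fun p => (p.1, 2 ^ κ ^^^ p.2)) ∪
      ((Tf κ).image fun p => (2 ^ κ ^^^ p.1, 2 ^ (κ + 1) ^^^ p.2)) ∪
      ((Tf κ).image fun p => (2 ^ κ ^^^ p.1, 2 ^ (κ + 1) ^^^ (2 ^ κ ^^^ p.2)))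

lemma Tf_lt : ∀ κ, ∀ p ∈ Tf κ, p.1 < 2 ^ κ ∧ p.2 < 2 ^ κ := by
  refine two_step ?_ ?_ ?_
  · intro p hp; simp [Tf] at hp; simp [hp]
  · intro p hp; simp [Tf] at hp
    rcases hp with h | h | h <;> simp [h]
  · intro κ ih1 ih2 p hp
    have hpow : (2:ℕ) ^ κ < 2 ^ (κ+1) ∧ (2:ℕ)^(κ+1) < 2^(κ+2) ∧ (2:ℕ)^κ < 2^(κ+2) ∧ (0:ℕ) < 2^κ := by
      refine ⟨Nat.pow_lt_pow_right (by norm_num) (by omega),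
        Nat.pow_lt_pow_right (by norm_num) (by omega),
        Nat.pow_lt_pow_right (by norm_num) (by omega), Nat.two_pow_pos _⟩
    simp only [Tf, Finset.mem_union, Finset.mem_image] at hp
    have mono : ∀ a b : ℕ, a ≤ b → (2:ℕ)^a ≤ 2^b := fun a b h => Nat.pow_le_pow_right (by norm_num) h
    rcases hp with ((((⟨q, hq, rfl⟩ | ⟨q, hq, rfl⟩) | h) | ⟨q, hq, rfl⟩) | ⟨q, hq, rfl⟩) | ⟨q, hq, rfl⟩
    · obtain ⟨h1, h2⟩ := ih2 q hq
      exact ⟨mask_lt h1, lt_of_lt_of_le h2 (mono (κ+1) (κ+2) (by omega))⟩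
    · obtain ⟨h1, h2⟩ := ih2 q hq
      exact ⟨mask_lt h1, mask_lt h2⟩
    · obtain ⟨h1, h2⟩ := ih1 p h
      exact ⟨lt_of_lt_of_le h1 (mono κ (κ+2) (by omega)), lt_of_lt_of_le h2 (mono κ (κ+2) (by omega))⟩
    · obtain ⟨h1, h2⟩ := ih1 q hq
      exact ⟨lt_of_lt_of_le h1 (mono κ (κ+2) (by omega)), lt_of_lt_of_le (mask_lt h2) (mono (κ+1) (κ+2) (by omega))⟩
    · obtain ⟨h1, h2⟩ := ih1 q hq
      refine ⟨lt_of_lt_of_le (mask_lt h1) (mono (κ+1) (κ+2) (by omega)), mask_lt ?_⟩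
      exact lt_of_lt_of_le h2 (le_of_lt hpow.1)
    · obtain ⟨h1, h2⟩ := ih1 q hq
      refine ⟨lt_of_lt_of_le (mask_lt h1) (mono (κ+1) (κ+2) (by omega)), mask_lt (mask_lt h2)⟩

lemma Tf_inv {κ i m : ℕ} (h : (i, m) ∈ Tf (κ + 2)) :
    (Nat.testBit i (κ+1) = true ∧ (2^(κ+1) ^^^ i, m % 2^(κ+1)) ∈ Tf (κ+1))
    ∨ (Nat.testBit i (κ+1) = false ∧ Nat.testBit i κ = false ∧
        Nat.testBit m (κ+1) = false ∧ (i, m % 2^κ) ∈ Tf κ)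
    ∨ (Nat.testBit i (κ+1) = false ∧ Nat.testBit i κ = true ∧
        Nat.testBit m (κ+1) = true ∧ (2^κ ^^^ i, m % 2^κ) ∈ Tf κ) := by
  have mono : ∀ a b : ℕ, a ≤ b → (2:ℕ)^a ≤ 2^b := fun a b hh => Nat.pow_le_pow_right (by norm_num) hh
  simp only [Tf, Finset.mem_union, Finset.mem_image] at h
  rcases h with ((((⟨q, hq, he⟩ | ⟨q, hq, he⟩) | h) | ⟨q, hq, he⟩) | ⟨q, hq, he⟩) | ⟨q, hq, he⟩
  · obtain ⟨h1, h2⟩ := Tf_lt (κ+1) q hq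
    obtain ⟨rfl, rfl⟩ := Prod.mk.inj he
    refine Or.inl ⟨tb_mask_self h1, ?_⟩
    rw [Nat.xor_xor_cancel_left, mod_two_pow_eq_self h2]
    exact hq
  · obtain ⟨h1, h2⟩ := Tf_lt (κ+1) q hq
    obtain ⟨rfl, rfl⟩ := Prod.mk.inj he
    refine Or.inl ⟨tb_mask_self h1, ?_⟩
    rw [Nat.xor_xor_cancel_left, mask_mod (le_refl _), mod_two_pow_eq_self h2]
    exact hq
  · obtain ⟨h1, h2⟩ := Tf_lt κ (i, m) h
    refine Or.inr (Or.inl ⟨Nat.testBit_eq_false_of_lt (lt_of_lt_of_le h1 (mono κ (κ+1) (by omega))),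
      Nat.testBit_eq_false_of_lt h1,
      Nat.testBit_eq_false_of_lt (lt_of_lt_of_le h2 (mono κ (κ+1) (by omega))), ?_⟩)
    rw [mod_two_pow_eq_self h2]; exact h
  · obtain ⟨h1, h2⟩ := Tf_lt κ q hq
    obtain ⟨rfl, rfl⟩ := Prod.mk.inj he
    refine Or.inr (Or.inl ⟨Nat.testBit_eq_false_of_lt (lt_of_lt_of_le h1 (mono κ (κ+1) (by omega))),
      Nat.testBit_eq_false_of_lt h1,
      Nat.testBit_eq_false_of_lt (mask_lt h2), ?_⟩)
    rw [mask_mod (le_refl _), mod_two_pow_eq_self h2]; exact hq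
  · obtain ⟨h1, h2⟩ := Tf_lt κ q hq
    obtain ⟨rfl, rfl⟩ := Prod.mk.inj he
    refine Or.inr (Or.inr ⟨Nat.testBit_eq_false_of_lt (mask_lt h1), ?_,
      tb_mask_self (lt_of_lt_of_le h2 (mono κ (κ+1) (by omega))), ?_⟩)
    · rw [tb_mask_self h1]
    · rw [Nat.xor_xor_cancel_left, mask_mod (by omega), mod_two_pow_eq_self h2]; exact hq
  · obtain ⟨h1, h2⟩ := Tf_lt κ q hq
    obtain ⟨rfl, rfl⟩ := Prod.mk.inj he
    refine Or.inr (Or.inr ⟨Nat.testBit_eq_false_of_lt (mask_lt h1), ?_,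
      tb_mask_self (mask_lt h2), ?_⟩)
    · rw [tb_mask_self h1]
    · rw [Nat.xor_xor_cancel_left, mask_mod (by omega), mask_mod (le_refl _), mod_two_pow_eq_self h2]
      exact hq

lemma Tf_valid : ∀ κ : ℕ, ∀ i m m' hb : ℕ,
    Nat.testBit (m ^^^ m') hb = true →
    (∀ j, hb < j → Nat.testBit (m ^^^ m') j = false) →
    Nat.testBit i hb = false →
    (i, m) ∈ Tf κ → (i, m') ∈ Tf κ → (i ^^^ (m ^^^ m'), m') ∈ Tf κ → False := by
  refine two_step ?_ ?_ ?_
  · intro i m m' hb h1 h2 h3 hm hm' hx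
    simp only [Tf, Finset.mem_singleton, Prod.mk.injEq] at hm hm'
    rw [hm.2, hm'.2, Nat.xor_self, Nat.zero_testBit] at h1
    exact Bool.false_ne_true h1
  · intro i m m' hb h1 h2 h3 hm hm' hx
    simp only [Tf, Finset.mem_insert, Finset.mem_singleton, Prod.mk.injEq] at hm hm'
    have hd0 : m ^^^ m' ≠ 0 := by
      intro h0
      rw [h0, Nat.zero_testBit] at h1
      exact Bool.false_ne_true h1
    have hmm' : m ≠ m' := fun he => hd0 (by rw [he, Nat.xor_self])
    have hi1 : i = 1 ∧ ((m = 0 ∧ m' = 1) ∨ (m = 1 ∧ m' = 0)) := by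
      rcases hm with ⟨hi, hm⟩ | ⟨hi, hm⟩ | ⟨hi, hm⟩ <;>
        rcases hm' with ⟨hi', hm2⟩ | ⟨hi', hm2⟩ | ⟨hi', hm2⟩ <;> omega
    have hδ : m ^^^ m' = 1 := by
      rcases hi1.2 with ⟨rfl, rfl⟩ | ⟨rfl, rfl⟩ <;> rfl
    rw [hδ] at h1
    have hb0 : hb = 0 := by
      by_contra hne
      rw [Nat.testBit_eq_false_of_lt (show 1 < 2 ^ hb by
        have : 2 ^ 1 ≤ 2 ^ hb := Nat.pow_le_pow_right (by norm_num) (by omega)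
        omega)] at h1
      exact Bool.false_ne_true h1
    rw [hi1.1, hb0] at h3
    exact Bool.false_ne_true (h3 ▸ rfl)
  · intro κ ih1 ih2 i m m' hb h1 h2 h3 hm hm' hx
    have hbnd := Tf_lt (κ+2) (i, m) hm
    have hbnd' := Tf_lt (κ+2) (i, m') hm'
    have hδlt2 : m ^^^ m' < 2 ^ (κ+2) := Nat.xor_lt_two_pow hbnd.2 hbnd'.2
    have hble : hb < κ + 2 := by
      by_contra hc
      have hge := tb_ge h1
      have : (2:ℕ) ^ (κ+2) ≤ 2 ^ hb := Nat.pow_le_pow_right (by norm_num) (by omega)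
      omega
    rcases Tf_inv hm with ⟨hA, hmem⟩ | ⟨hF1, hF2, hmbit, hmem⟩ | ⟨hF1, hT2, hmbit, hmem⟩
    · -- i has top bit set
      have hbne : hb ≠ κ + 1 := fun he => by rw [he, hA] at h3; simp at h3
      have hδH : m ^^^ m' < 2 ^ (κ+1) := lt_of_high_bits (fun j hj => h2 j (by omega))
      have hxbit : Nat.testBit (i ^^^ (m ^^^ m')) (κ+1) = true := by
        rw [Nat.testBit_xor, hA, Nat.testBit_eq_false_of_lt hδH]; rfl
      rcases Tf_inv hm' with ⟨_, hmem'⟩ | ⟨hF, _⟩ | ⟨hF, _⟩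
      · rcases Tf_inv hx with ⟨_, hmemx⟩ | ⟨hF, _⟩ | ⟨hF, _⟩
        · have hmodeq : (m % 2^(κ+1)) ^^^ (m' % 2^(κ+1)) = m ^^^ m' := by
            rw [xor_mod_two_pow, mod_two_pow_eq_self hδH]
          refine ih2 (2^(κ+1) ^^^ i) (m % 2^(κ+1)) (m' % 2^(κ+1)) hb ?_ ?_ ?_ hmem hmem' ?_
          · rw [hmodeq]; exact h1
          · intro j hj; rw [hmodeq]; exact h2 j hj
          · rw [tb_mask_ne hbne]; exact h3
          · rw [hmodeq, Nat.xor_assoc]; exact hmemx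
        · simp [hxbit] at hF
        · simp [hxbit] at hF
      · simp [hA] at hF
      · simp [hA] at hF
    · -- i in low quarter
      rcases Tf_inv hm' with ⟨hT, _⟩ | ⟨_, _, hmbit', hmem'⟩ | ⟨_, hT, _, _⟩
      · simp [hF1] at hT
      · have hδtop : Nat.testBit (m ^^^ m') (κ+1) = false := by
          rw [Nat.testBit_xor, hmbit, hmbit']; rfl
        have hbne : hb ≠ κ + 1 := fun he => by rw [he, hδtop] at h1; simp at h1
        by_cases hbeq : hb = κ
        · have hδκ : Nat.testBit (m ^^^ m') κ = true := hbeq ▸ h1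
          have hx1 : Nat.testBit (i ^^^ (m ^^^ m')) (κ+1) = false := by
            rw [Nat.testBit_xor, hF1, hδtop]; rfl
          have hx2 : Nat.testBit (i ^^^ (m ^^^ m')) κ = true := by
            rw [Nat.testBit_xor, hF2, hδκ]; rfl
          rcases Tf_inv hx with ⟨hT, _⟩ | ⟨_, hF, _, _⟩ | ⟨_, _, hmT, _⟩
          · simp [hx1] at hT
          · simp [hx2] at hF
          · simp [hmbit'] at hmT
        · have hδκ : Nat.testBit (m ^^^ m') κ = false := h2 κ (by omega)
          have hδQ : m ^^^ m' < 2 ^ κ := lt_of_high_bits (fun j hj => by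
            rcases Nat.eq_or_lt_of_le hj with he | hlt
            · rw [← he]; exact hδκ
            · exact h2 j (by omega))
          have hx1 : Nat.testBit (i ^^^ (m ^^^ m')) (κ+1) = false := by
            rw [Nat.testBit_xor, hF1, hδtop]; rfl
          have hx2 : Nat.testBit (i ^^^ (m ^^^ m')) κ = false := by
            rw [Nat.testBit_xor, hF2, hδκ]; rfl
          rcases Tf_inv hx with ⟨hT, _⟩ | ⟨_, _, _, hmemx⟩ | ⟨_, hT, _, _⟩
          · simp [hx1] at hT
          · have hmodeq : (m % 2^κ) ^^^ (m' % 2^κ) = m ^^^ m' := by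
              rw [xor_mod_two_pow, mod_two_pow_eq_self hδQ]
            refine ih1 i (m % 2^κ) (m' % 2^κ) hb ?_ ?_ h3 hmem hmem' ?_
            · rw [hmodeq]; exact h1
            · intro j hj; rw [hmodeq]; exact h2 j hj
            · rw [hmodeq]; exact hmemx
          · simp [hx2] at hT
      · simp [hF2] at hT
    · -- i in second quarter
      rcases Tf_inv hm' with ⟨hT, _⟩ | ⟨_, hF, _, _⟩ | ⟨_, _, hmbit', hmem'⟩
      · simp [hF1] at hT
      · simp [hT2] at hF
      · have hδtop : Nat.testBit (m ^^^ m') (κ+1) = false := by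
          rw [Nat.testBit_xor, hmbit, hmbit']; rfl
        have hbne : hb ≠ κ + 1 := fun he => by rw [he, hδtop] at h1; simp at h1
        have hbneκ : hb ≠ κ := fun he => by rw [he, hT2] at h3; simp at h3
        have hδκ : Nat.testBit (m ^^^ m') κ = false := h2 κ (by omega)
        have hδQ : m ^^^ m' < 2 ^ κ := lt_of_high_bits (fun j hj => by
          rcases Nat.eq_or_lt_of_le hj with he | hlt
          · rw [← he]; exact hδκ
          · exact h2 j (by omega))
        have hx1 : Nat.testBit (i ^^^ (m ^^^ m')) (κ+1) = false := by
          rw [Nat.testBit_xor, hF1, hδtop]; rfl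
        have hx2 : Nat.testBit (i ^^^ (m ^^^ m')) κ = true := by
          rw [Nat.testBit_xor, hT2, hδκ]; rfl
        rcases Tf_inv hx with ⟨hT, _⟩ | ⟨_, hF, _, _⟩ | ⟨_, _, _, hmemx⟩
        · simp [hx1] at hT
        · simp [hx2] at hF
        · have hmodeq : (m % 2^κ) ^^^ (m' % 2^κ) = m ^^^ m' := by
            rw [xor_mod_two_pow, mod_two_pow_eq_self hδQ]
          refine ih1 (2^κ ^^^ i) (m % 2^κ) (m' % 2^κ) hb ?_ ?_ ?_ hmem hmem' ?_
          · rw [hmodeq]; exact h1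
          · intro j hj; rw [hmodeq]; exact h2 j hj
          · rw [tb_mask_ne hbneκ]; exact h3
          · rw [hmodeq, Nat.xor_assoc]; exact hmemx

lemma xor_inj_pair (c d : ℕ) : Function.Injective (fun p : ℕ × ℕ => (c ^^^ p.1, d ^^^ p.2)) := by
  intro a b h
  simp only [Prod.mk.injEq] at h
  have h1 := congrArg (fun z => c ^^^ z) h.1
  have h2 := congrArg (fun z => d ^^^ z) h.2
  simp only [Nat.xor_xor_cancel_left] at h1 h2
  exact Prod.ext h1 h2

lemma Tf_card_rec (κ : ℕ) : (Tf (κ+2)).card = 2 * (Tf (κ+1)).card + 4 * (Tf κ).card := by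
  classical
  set A1 := ((Tf (κ + 1)).image fun p => (2 ^ (κ + 1) ^^^ p.1, p.2)) with hA1
  set A2 := ((Tf (κ + 1)).image fun p => (2 ^ (κ + 1) ^^^ p.1, 2 ^ (κ + 1) ^^^ p.2)) with hA2
  set B1 := Tf κ with hB1
  set B2 := ((Tf κ).image fun p => (p.1, 2 ^ κ ^^^ p.2)) with hB2
  set B3 := ((Tf κ).image fun p => (2 ^ κ ^^^ p.1, 2 ^ (κ + 1) ^^^ p.2)) with hB3
  set B4 := ((Tf κ).image fun p => (2 ^ κ ^^^ p.1, 2 ^ (κ + 1) ^^^ (2 ^ κ ^^^ p.2))) with hB4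
  have hmono : (2:ℕ)^κ ≤ 2^(κ+1) := Nat.pow_le_pow_right (by norm_num) (by omega)
  have s1 : ∀ p ∈ A1, p.1.testBit (κ+1) = true ∧ p.2.testBit (κ+1) = false := by
    intro p hp
    simp only [hA1, Finset.mem_image] at hp
    obtain ⟨q, hq, rfl⟩ := hp
    obtain ⟨hq1, hq2⟩ := Tf_lt _ q hq
    exact ⟨tb_mask_self hq1, Nat.testBit_eq_false_of_lt hq2⟩
  have s2 : ∀ p ∈ A2, p.1.testBit (κ+1) = true ∧ p.2.testBit (κ+1) = true := by
    intro p hp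
    simp only [hA2, Finset.mem_image] at hp
    obtain ⟨q, hq, rfl⟩ := hp
    obtain ⟨hq1, hq2⟩ := Tf_lt _ q hq
    exact ⟨tb_mask_self hq1, tb_mask_self hq2⟩
  have s3 : ∀ p ∈ B1, p.1.testBit (κ+1) = false ∧ p.1.testBit κ = false ∧
      p.2.testBit (κ+1) = false ∧ p.2.testBit κ = false := by
    intro p hp
    obtain ⟨hq1, hq2⟩ := Tf_lt _ p hp
    exact ⟨Nat.testBit_eq_false_of_lt (by omega), Nat.testBit_eq_false_of_lt hq1,
      Nat.testBit_eq_false_of_lt (by omega), Nat.testBit_eq_false_of_lt hq2⟩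
  have s4 : ∀ p ∈ B2, p.1.testBit (κ+1) = false ∧ p.1.testBit κ = false ∧
      p.2.testBit (κ+1) = false ∧ p.2.testBit κ = true := by
    intro p hp
    simp only [hB2, Finset.mem_image] at hp
    obtain ⟨q, hq, rfl⟩ := hp
    obtain ⟨hq1, hq2⟩ := Tf_lt _ q hq
    exact ⟨Nat.testBit_eq_false_of_lt (by omega), Nat.testBit_eq_false_of_lt hq1,
      Nat.testBit_eq_false_of_lt (mask_lt hq2), tb_mask_self hq2⟩
  have s5 : ∀ p ∈ B3, p.1.testBit (κ+1) = false ∧ p.1.testBit κ = true ∧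
      p.2.testBit (κ+1) = true ∧ p.2.testBit κ = false := by
    intro p hp
    simp only [hB3, Finset.mem_image] at hp
    obtain ⟨q, hq, rfl⟩ := hp
    obtain ⟨hq1, hq2⟩ := Tf_lt _ q hq
    refine ⟨Nat.testBit_eq_false_of_lt (mask_lt hq1), tb_mask_self hq1,
      tb_mask_self (by omega), ?_⟩
    rw [tb_mask_ne (by omega)]
    exact Nat.testBit_eq_false_of_lt hq2
  have s6 : ∀ p ∈ B4, p.1.testBit (κ+1) = false ∧ p.1.testBit κ = true ∧
      p.2.testBit (κ+1) = true ∧ p.2.testBit κ = true := by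
    intro p hp
    simp only [hB4, Finset.mem_image] at hp
    obtain ⟨q, hq, rfl⟩ := hp
    obtain ⟨hq1, hq2⟩ := Tf_lt _ q hq
    refine ⟨Nat.testBit_eq_false_of_lt (mask_lt hq1), tb_mask_self hq1,
      tb_mask_self (mask_lt hq2), ?_⟩
    rw [tb_mask_ne (by omega)]
    exact tb_mask_self hq2
  have hrw : Tf (κ+2) = A1 ∪ A2 ∪ B1 ∪ B2 ∪ B3 ∪ B4 := rfl
  have bne : ∀ {x : ℕ} {t : ℕ}, x.testBit t = true → x.testBit t = false → False :=
    fun h1 h2 => Bool.false_ne_true (h2.symm.trans h1)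
  have d1 : Disjoint A1 A2 := Finset.disjoint_left.mpr fun p h1 h2 =>
    bne (s2 p h2).2 (s1 p h1).2
  have d2 : Disjoint (A1 ∪ A2) B1 := Finset.disjoint_left.mpr fun p h1 h2 => by
    rcases Finset.mem_union.mp h1 with h | h
    · exact bne (s1 p h).1 (s3 p h2).1
    · exact bne (s2 p h).1 (s3 p h2).1
  have d3 : Disjoint (A1 ∪ A2 ∪ B1) B2 := Finset.disjoint_left.mpr fun p h1 h2 => by
    rcases Finset.mem_union.mp h1 with h | h
    · rcases Finset.mem_union.mp h with h' | h'
      · exact bne (s1 p h').1 (s4 p h2).1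
      · exact bne (s2 p h').1 (s4 p h2).1
    · exact bne (s4 p h2).2.2.2 (s3 p h).2.2.2
  have d4 : Disjoint (A1 ∪ A2 ∪ B1 ∪ B2) B3 := Finset.disjoint_left.mpr fun p h1 h2 => by
    have h6 := s5 p h2
    rcases Finset.mem_union.mp h1 with h | h
    · rcases Finset.mem_union.mp h with h' | h'
      · rcases Finset.mem_union.mp h' with h'' | h''
        · exact bne (s1 p h'').1 h6.1
        · exact bne (s2 p h'').1 h6.1
      · exact bne h6.2.1 (s3 p h').2.1
    · exact bne h6.2.1 (s4 p h).2.1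
  have d5 : Disjoint (A1 ∪ A2 ∪ B1 ∪ B2 ∪ B3) B4 := Finset.disjoint_left.mpr fun p h1 h2 => by
    have h6 := s6 p h2
    rcases Finset.mem_union.mp h1 with h | h
    · rcases Finset.mem_union.mp h with h' | h'
      · rcases Finset.mem_union.mp h' with h'' | h''
        · rcases Finset.mem_union.mp h'' with h3 | h3
          · exact bne (s1 p h3).1 h6.1
          · exact bne (s2 p h3).1 h6.1
        · exact bne h6.2.1 (s3 p h'').2.1
      · exact bne h6.2.1 (s4 p h').2.1
    · exact bne h6.2.2.2 (s5 p h).2.2.2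
  have c1 : A1.card = (Tf (κ+1)).card := by
    rw [hA1]
    apply Finset.card_image_of_injective
    have := xor_inj_pair (2^(κ+1)) 0
    intro a b h
    apply this
    simpa [Nat.zero_xor] using h
  have c2 : A2.card = (Tf (κ+1)).card := by
    rw [hA2]; exact Finset.card_image_of_injective _ (xor_inj_pair _ _)
  have c4 : B2.card = (Tf κ).card := by
    rw [hB2]
    apply Finset.card_image_of_injective
    have := xor_inj_pair 0 (2^κ)
    intro a b h
    apply this
    simpa [Nat.zero_xor] using h
  have c5 : B3.card = (Tf κ).card := by
    rw [hB3]; exact Finset.card_image_of_injective _ (xor_inj_pair _ _)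
  have c6 : B4.card = (Tf κ).card := by
    rw [hB4]
    apply Finset.card_image_of_injective
    intro a b h
    simp only [Prod.mk.injEq] at h
    have h1 := congrArg (fun z => 2^κ ^^^ z) h.1
    have h2 := congrArg (fun z => 2^κ ^^^ (2^(κ+1) ^^^ z)) h.2
    simp only [Nat.xor_xor_cancel_left] at h1 h2
    exact Prod.ext h1 h2
  rw [hrw, Finset.card_union_of_disjoint d5, Finset.card_union_of_disjoint d4,
    Finset.card_union_of_disjoint d3, Finset.card_union_of_disjoint d2,
    Finset.card_union_of_disjoint d1, c1, c2, c4, c5, c6]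
  ring

lemma Tf_card_zero : (Tf 0).card = 1 := rfl

lemma Tf_card_one : (Tf 1).card = 3 := rfl

lemma Tf_ratio : ∀ κ, 3 * (Tf κ).card ≤ (Tf (κ+1)).card ∧ (Tf (κ+1)).card ≤ 4 * (Tf κ).card := by
  intro κ
  induction κ with
  | zero => rw [Tf_card_zero, Tf_card_one]; omega
  | succ n ih =>
    have hc : (Tf (n+1+1)).card = 2*(Tf (n+1)).card + 4*(Tf n).card := Tf_card_rec n
    omega

lemma main_count (d : ℕ → ℕ) (hd0 : d 0 = 0) (hd1 : d 1 = 1)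
    (hdk : ∀ k, 2 ≤ k → d k = 2 ^ (2 * k - 2) + 2 ^ (2 * k - 4) + d (k - 1) + 7 * d (k - 2)) :
    ∀ κ, 4 ^ κ ≤ d κ + (Tf κ).card := by
  refine two_step ?_ ?_ ?_
  · rw [hd0, Tf_card_zero]; norm_num
  · rw [hd1, Tf_card_one]; norm_num
  · intro κ ih1 ih2
    have h := hdk (κ+2) (by omega)
    have e1 : 2*(κ+2)-2 = 2*κ+2 := by omega
    have e2 : 2*(κ+2)-4 = 2*κ := by omega
    have e3 : κ+2-1 = κ+1 := by omega
    have e4 : κ+2-2 = κ := by omega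
    rw [e1, e2, e3, e4] at h
    have hc := Tf_card_rec κ
    have hr := (Tf_ratio κ).1
    have q2 : (2:ℕ)^(2*κ) = 4^κ := by
      rw [show (4:ℕ) = 2^2 by norm_num, ← pow_mul]
    have q1 : (2:ℕ)^(2*κ+2) = 4 * 4^κ := by
      rw [pow_add, q2]; ring
    have p0 : (4:ℕ)^(κ+1) = 4 * 4^κ := by rw [pow_succ]; ring
    have p2 : (4:ℕ)^(κ+2) = 16 * 4^κ := by rw [pow_add]; ring
    rw [q1, q2] at h
    rw [p0] at ih2
    rw [p2]
    omega


lemma lex_nat {a b c d N : ℕ} (hb : b < N) (hd : d < N) :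
    a * N + b < c * N + d ↔ (a < c ∨ (a = c ∧ b < d)) := by
  constructor
  · intro h
    rcases lt_trichotomy a c with h1 | h1 | h1
    · exact Or.inl h1
    · subst h1
      exact Or.inr ⟨rfl, Nat.lt_of_add_lt_add_left h⟩
    · exfalso
      have h2 : (c + 1) * N ≤ a * N := Nat.mul_le_mul_right N h1
      have h3 : (c + 1) * N = c * N + N := by ring
      have h4 : a * N ≤ a * N + b := Nat.le_add_right _ _
      linarith
  · intro h
    rcases h with h | ⟨rfl, h⟩
    · have h2 : (a + 1) * N ≤ c * N := Nat.mul_le_mul_right N h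
      have h3 : (a + 1) * N = a * N + N := by ring
      linarith [Nat.le_add_right (c * N) d]
    · exact Nat.add_lt_add_left h _

lemma lexPos_lt_iff {n : ℕ} (p q : Fin n × Fin n) :
    lexPos Fin.val Fin.val p < lexPos Fin.val Fin.val q ↔
      (p.1.val < q.1.val ∨ (p.1 = q.1 ∧ p.2.val < q.2.val)) := by
  have hp2 : p.2.val < Finset.univ.sup (Fin.val : Fin n → ℕ) + 1 :=
    Nat.lt_succ_of_le (Finset.le_sup (Finset.mem_univ _))
  have hq2 : q.2.val < Finset.univ.sup (Fin.val : Fin n → ℕ) + 1 :=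
    Nat.lt_succ_of_le (Finset.le_sup (Finset.mem_univ _))
  unfold lexPos
  rw [lex_nat hp2 hq2]
  constructor
  · rintro (h | ⟨h1, h2⟩)
    · exact Or.inl h
    · exact Or.inr ⟨Fin.ext h1, h2⟩
  · rintro (h | ⟨h1, h2⟩)
    · exact Or.inl h
    · exact Or.inr ⟨congrArg Fin.val h1, h2⟩

open Classical in
lemma firstFitWith_eq {V : Type*} (G : SimpleGraph V) (ord : V → ℕ) (S : Set V) (C₀ : V → ℕ)
    (v : V) :
    firstFitWith G ord S C₀ v =
      if v ∈ S then C₀ v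
      else sInf {c : ℕ | 1 ≤ c ∧ (∀ u, G.Adj u v → u ∈ S → C₀ u ≠ c) ∧
        ∀ u, (InvImage Nat.lt ord) u v → G.Adj u v → u ∉ S →
          firstFitWith G ord S C₀ u ≠ c} := by
  conv_lhs => rw [firstFitWith, WellFounded.fix_eq]
  rfl

lemma xor_helper (a b c : ℕ) : (a ^^^ (b ^^^ c)) ^^^ (a ^^^ b) = c := by
  apply Nat.eq_of_testBit_eq
  intro t
  simp only [Nat.testBit_xor]
  cases a.testBit t <;> cases b.testBit t <;> cases c.testBit t <;> rfl

lemma xor_helper2 (a b c : ℕ) : (a ^^^ (b ^^^ c)) ^^^ (a ^^^ b ^^^ c) = 0 := by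
  apply Nat.eq_of_testBit_eq
  intro t
  simp only [Nat.testBit_xor, Nat.zero_testBit]
  cases a.testBit t <;> cases b.testBit t <;> cases c.testBit t <;> rfl

lemma top_bit_of_lt {m m' hb : ℕ} (h : m < m') (h1 : Nat.testBit (m ^^^ m') hb = true)
    (h2 : ∀ j, hb < j → Nat.testBit (m ^^^ m') j = false) :
    Nat.testBit m hb = false ∧ Nat.testBit m' hb = true := by
  have hhi : ∀ j, hb < j → Nat.testBit m j = Nat.testBit m' j := by
    intro j hj
    have hx := h2 j hj
    rw [Nat.testBit_xor] at hx
    revert hx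
    cases m.testBit j <;> cases m'.testBit j <;> simp
  by_cases hmb : Nat.testBit m hb
  · exfalso
    have hm'b : Nat.testBit m' hb = false := by
      rw [Nat.testBit_xor, hmb] at h1
      revert h1
      cases m'.testBit hb <;> simp
    have := Nat.lt_of_testBit hb hm'b hmb (fun j hj => (hhi j hj).symm)
    omega
  · simp only [Bool.not_eq_true] at hmb
    refine ⟨hmb, ?_⟩
    rw [Nat.testBit_xor, hmb] at h1
    revert h1
    cases m'.testBit hb <;> simp

end GDSaux

/-- With `d_0 = 0`, `d_1 = 1`, and
`d_k = 2^(2k-2) + 2^(2k-4) + d_(k-1) + 7·d_(k-2)` for `k ≥ 2`, the Latin square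
`(L_k, lex)` of order `2^k` has a greedy defining set of cardinality at most `d_k`. -/
theorem Lk_gds_upper_bound (d : ℕ → ℕ) (hd0 : d 0 = 0) (hd1 : d 1 = 1)
    (hdk : ∀ k, 2 ≤ k →
      d k = 2 ^ (2 * k - 2) + 2 ^ (2 * k - 4) + d (k - 1) + 7 * d (k - 2)) :
    ∀ k : ℕ, ∃ S : Finset (Fin (2 ^ k) × Fin (2 ^ k)),
      IsRectGDS (Lsquare k) ↑S ∧ S.card ≤ d k := by
  intro k
  classical
  set S : Finset (Fin (2 ^ k) × Fin (2 ^ k)) :=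
    Finset.univ.filter (fun p => (p.1.val, p.1.val ^^^ p.2.val) ∉ GDSaux.Tf k) with hSdef
  have hSmem : ∀ u : Fin (2 ^ k) × Fin (2 ^ k),
      u ∈ (↑S : Set (Fin (2 ^ k) × Fin (2 ^ k))) ↔ (u.1.val, u.1.val ^^^ u.2.val) ∉ GDSaux.Tf k := by
    intro u
    rw [Finset.mem_coe, hSdef, Finset.mem_filter]
    simp
  have hxlt : ∀ a b : Fin (2 ^ k), a.val ^^^ b.val < 2 ^ k :=
    fun a b => Nat.xor_lt_two_pow a.isLt b.isLt
  have latin_ne : ∀ u w : Fin (2 ^ k) × Fin (2 ^ k),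
      ((⊤ : SimpleGraph (Fin (2 ^ k))).boxProd ⊤).Adj u w →
        Lsquare k u.1 u.2 ≠ Lsquare k w.1 w.2 := by
    intro u w hadj
    rw [SimpleGraph.boxProd_adj] at hadj
    have h1 := hxlt u.1 u.2
    have h2 := hxlt w.1 w.2
    intro hc
    have hxor : u.1.val ^^^ u.2.val = w.1.val ^^^ w.2.val := by
      simp only [Lsquare] at hc; omega
    rcases hadj with ⟨hne, heq⟩ | ⟨hne, heq⟩
    · rw [SimpleGraph.top_adj] at hne
      rw [heq] at hxor
      have := congrArg (fun z => z ^^^ w.2.val) hxor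
      simp only [Nat.xor_xor_cancel_right] at this
      exact hne (Fin.ext this)
    · rw [SimpleGraph.top_adj] at hne
      rw [heq] at hxor
      have := congrArg (fun z => w.1.val ^^^ z) hxor
      simp only [Nat.xor_xor_cancel_left] at this
      exact hne (Fin.ext this)
  refine ⟨S, ?_, ?_⟩
  · -- the GDS property
    unfold IsRectGDS
    have main : ∀ v : Fin (2 ^ k) × Fin (2 ^ k),
        firstFitWith ((⊤ : SimpleGraph (Fin (2 ^ k))).boxProd ⊤) (lexPos Fin.val Fin.val)
          (↑S) (fun p => Lsquare k p.1 p.2) v = Lsquare k v.1 v.2 := by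
      intro v
      refine WellFounded.induction
        (InvImage.wf (lexPos (Fin.val : Fin (2 ^ k) → ℕ) Fin.val) Nat.lt_wfRel.wf)
        (C := fun v => firstFitWith ((⊤ : SimpleGraph (Fin (2 ^ k))).boxProd ⊤)
          (lexPos Fin.val Fin.val) (↑S) (fun p => Lsquare k p.1 p.2) v = Lsquare k v.1 v.2)
        v ?_
      intro w IH
      rw [GDSaux.firstFitWith_eq]
      by_cases hw : w ∈ (↑S : Set (Fin (2 ^ k) × Fin (2 ^ k)))
      · rw [if_pos hw]
      · rw [if_neg hw]
        have hwT : (w.1.val, w.1.val ^^^ w.2.val) ∈ GDSaux.Tf k := by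
          by_contra hc
          exact hw ((hSmem w).mpr hc)
        have hm := hxlt w.1 w.2
        have memL : Lsquare k w.1 w.2 ∈ {c : ℕ | 1 ≤ c ∧
            (∀ u, ((⊤ : SimpleGraph (Fin (2 ^ k))).boxProd ⊤).Adj u w →
              u ∈ (↑S : Set (Fin (2 ^ k) × Fin (2 ^ k))) → Lsquare k u.1 u.2 ≠ c) ∧
            ∀ u, (InvImage Nat.lt (lexPos Fin.val Fin.val)) u w →
              ((⊤ : SimpleGraph (Fin (2 ^ k))).boxProd ⊤).Adj u w →
              u ∉ (↑S : Set (Fin (2 ^ k) × Fin (2 ^ k))) →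
              firstFitWith ((⊤ : SimpleGraph (Fin (2 ^ k))).boxProd ⊤) (lexPos Fin.val Fin.val)
                (↑S) (fun p => Lsquare k p.1 p.2) u ≠ c} := by
          refine ⟨?_, ?_, ?_⟩
          · show 1 ≤ 2 ^ k - (w.1.val ^^^ w.2.val)
            omega
          · intro u hadj _
            exact latin_ne u w hadj
          · intro u hord hadj _
            rw [IH u hord]
            exact latin_ne u w hadj
        have hne := Set.nonempty_of_mem memL
        have key : ∀ c : ℕ, c < 2 ^ k - (w.1.val ^^^ w.2.val) → 1 ≤ c →
            (∀ u, ((⊤ : SimpleGraph (Fin (2 ^ k))).boxProd ⊤).Adj u w →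
              u ∈ (↑S : Set (Fin (2 ^ k) × Fin (2 ^ k))) → Lsquare k u.1 u.2 ≠ c) →
            (∀ u, (InvImage Nat.lt (lexPos Fin.val Fin.val)) u w →
              ((⊤ : SimpleGraph (Fin (2 ^ k))).boxProd ⊤).Adj u w →
              u ∉ (↑S : Set (Fin (2 ^ k) × Fin (2 ^ k))) →
              firstFitWith ((⊤ : SimpleGraph (Fin (2 ^ k))).boxProd ⊤) (lexPos Fin.val Fin.val)
                (↑S) (fun p => Lsquare k p.1 p.2) u ≠ c) → False := by
          intro c hcL hc1 hc2 hc3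
          have hm'lt : 2 ^ k - c < 2 ^ k := by omega
          have hmm' : (w.1.val ^^^ w.2.val) < 2 ^ k - c := by omega
          set m' : ℕ := 2 ^ k - c with hm'def
          set mv : ℕ := w.1.val ^^^ w.2.val with hmvdef
          have hδ0 : mv ^^^ m' ≠ 0 := by
            rw [Ne, Nat.xor_eq_zero_iff]
            omega
          obtain ⟨hb, hbT, hbH⟩ := Nat.exists_most_significant_bit hδ0
          have hδlt : mv ^^^ m' < 2 ^ k := Nat.xor_lt_two_pow (by omega) hm'lt
          set u1 : Fin (2 ^ k) × Fin (2 ^ k) :=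
            (w.1, ⟨w.1.val ^^^ m', Nat.xor_lt_two_pow w.1.isLt hm'lt⟩) with hu1def
          set u2 : Fin (2 ^ k) × Fin (2 ^ k) :=
            (⟨w.1.val ^^^ (mv ^^^ m'), Nat.xor_lt_two_pow w.1.isLt hδlt⟩, w.2) with hu2def
          have hjv : w.1.val ^^^ mv = w.2.val := Nat.xor_xor_cancel_left _ _
          have hC1 : Lsquare k u1.1 u1.2 = c := by
            show 2 ^ k - (w.1.val ^^^ (w.1.val ^^^ m')) = c
            rw [Nat.xor_xor_cancel_left]
            omega
          have hu2xor : u2.1.val ^^^ u2.2.val = m' := by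
            show (w.1.val ^^^ (mv ^^^ m')) ^^^ w.2.val = m'
            rw [← hjv]
            exact GDSaux.xor_helper _ _ _
          have hC2 : Lsquare k u2.1 u2.2 = c := by
            show 2 ^ k - (u2.1.val ^^^ u2.2.val) = c
            rw [hu2xor]
            omega
          have hadj1 : ((⊤ : SimpleGraph (Fin (2 ^ k))).boxProd ⊤).Adj u1 w := by
            rw [SimpleGraph.boxProd_adj]
            right
            refine ⟨?_, rfl⟩
            rw [SimpleGraph.top_adj]
            intro he
            have h0 : w.1.val ^^^ m' = w.2.val := congrArg Fin.val he
            rw [← hjv] at h0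
            have := congrArg (fun z => w.1.val ^^^ z) h0
            simp only [Nat.xor_xor_cancel_left] at this
            omega
          have hadj2 : ((⊤ : SimpleGraph (Fin (2 ^ k))).boxProd ⊤).Adj u2 w := by
            rw [SimpleGraph.boxProd_adj]
            left
            refine ⟨?_, rfl⟩
            rw [SimpleGraph.top_adj]
            intro he
            have h0 : w.1.val ^^^ (mv ^^^ m') = w.1.val := congrArg Fin.val he
            have := congrArg (fun z => w.1.val ^^^ z) h0
            simp only [Nat.xor_xor_cancel_left, Nat.xor_self] at this
            exact hδ0 this
          by_cases hbit : w.1.val.testBit hb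
          · -- u1 comes earlier in the scan
            obtain ⟨hmb, hm'b⟩ := GDSaux.top_bit_of_lt hmm' hbT hbH
            have hcol : w.1.val ^^^ m' < w.2.val := by
              rw [← hjv]
              refine Nat.lt_of_testBit hb ?_ ?_ ?_
              · rw [Nat.testBit_xor, hbit, hm'b]; rfl
              · rw [Nat.testBit_xor, hbit, hmb]; rfl
              · intro j hj
                have hx := hbH j hj
                rw [Nat.testBit_xor] at hx
                rw [Nat.testBit_xor, Nat.testBit_xor]
                revert hx
                cases mv.testBit j <;> cases m'.testBit j <;> simp
            have hord1 : (InvImage Nat.lt (lexPos Fin.val Fin.val)) u1 w :=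
              (GDSaux.lexPos_lt_iff u1 w).mpr (Or.inr ⟨rfl, hcol⟩)
            by_cases hu1S : u1 ∈ (↑S : Set (Fin (2 ^ k) × Fin (2 ^ k)))
            · exact hc2 u1 hadj1 hu1S hC1
            · exact hc3 u1 hord1 hadj1 hu1S (by rw [IH u1 hord1]; exact hC1)
          · -- use the validity of the construction
            simp only [Bool.not_eq_true] at hbit
            have hnotboth : (w.1.val, m') ∉ GDSaux.Tf k ∨
                (w.1.val ^^^ (mv ^^^ m'), m') ∉ GDSaux.Tf k := by
              by_contra hcon
              push_neg at hcon
              exact GDSaux.Tf_valid k w.1.val mv m' hb hbT hbH hbit hwT hcon.1 hcon.2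
            rcases hnotboth with hnot | hnot
            · have hu1S : u1 ∈ (↑S : Set (Fin (2 ^ k) × Fin (2 ^ k))) := by
                rw [hSmem]
                show (w.1.val, w.1.val ^^^ (w.1.val ^^^ m')) ∉ GDSaux.Tf k
                rw [Nat.xor_xor_cancel_left]
                exact hnot
              exact hc2 u1 hadj1 hu1S hC1
            · have hu2S : u2 ∈ (↑S : Set (Fin (2 ^ k) × Fin (2 ^ k))) := by
                rw [hSmem]
                rw [hu2xor]
                exact hnot
              exact hc2 u2 hadj2 hu2S hC2
        refine le_antisymm (Nat.sInf_le memL) ?_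
        by_contra hlt
        push_neg at hlt
        obtain ⟨hc1, hc2, hc3⟩ := Nat.sInf_mem hne
        exact key _ hlt hc1 hc2 hc3
    funext p
    exact main p
  · -- the cardinality bound
    have hcount := GDSaux.main_count d hd0 hd1 hdk k
    have hbij : (Finset.univ.filter (fun p : Fin (2 ^ k) × Fin (2 ^ k) =>
        (p.1.val, p.1.val ^^^ p.2.val) ∈ GDSaux.Tf k)).card = (GDSaux.Tf k).card := by
      apply Finset.card_bij (fun p _ => (p.1.val, p.1.val ^^^ p.2.val))
      · intro a ha
        exact (Finset.mem_filter.mp ha).2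
      · intro a ha b hb he
        rw [Prod.mk.injEq] at he
        have h1 : a.1 = b.1 := Fin.ext he.1
        have h2 := he.2
        rw [he.1] at h2
        have := congrArg (fun z => b.1.val ^^^ z) h2
        simp only [Nat.xor_xor_cancel_left] at this
        exact Prod.ext h1 (Fin.ext this)
      · intro q hq
        obtain ⟨hq1, hq2⟩ := GDSaux.Tf_lt k q hq
        refine ⟨(⟨q.1, hq1⟩, ⟨q.1 ^^^ q.2, Nat.xor_lt_two_pow hq1 hq2⟩), ?_, ?_⟩
        · rw [Finset.mem_filter]
          refine ⟨Finset.mem_univ _, ?_⟩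
          show (q.1, q.1 ^^^ (q.1 ^^^ q.2)) ∈ GDSaux.Tf k
          rw [Nat.xor_xor_cancel_left]
          exact hq
        · show (q.1, q.1 ^^^ (q.1 ^^^ q.2)) = q
          rw [Nat.xor_xor_cancel_left]
    have hsplit : (Finset.univ.filter (fun p : Fin (2 ^ k) × Fin (2 ^ k) =>
          (p.1.val, p.1.val ^^^ p.2.val) ∈ GDSaux.Tf k)).card + S.card =
        (Finset.univ : Finset (Fin (2 ^ k) × Fin (2 ^ k))).card := by
      rw [hSdef]
      exact Finset.card_filter_add_card_filter_not _
    have huniv : (Finset.univ : Finset (Fin (2 ^ k) × Fin (2 ^ k))).card = 4 ^ k := by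
      rw [Finset.card_univ]
      simp [Fintype.card_prod]
      rw [← mul_pow]
      norm_num
    omega
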